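/- Let h_c denote the c-th canonical Hoeffding projection of h, for 1 ≤ c ≤ k. For any two distinct subsets C_1, C_2 ⊆ {1,...,k} with C_1 ≠ C_2, the projections indexed by C_1 and C_2 are orthogonal in L²(P^{⊗k}): ∫ h_{|C_1|}(z_{C_1}) · h_{|C_2|}(z_{C_2}) dP^{⊗k}(z_1,...,z_k) = 0. -/

import Mathlib

open MeasureTheory Finset

/-- Marginal conditional expectation `E_J`: integrate out the coordinates outside `J`. -/
noncomputable def margE {Z : Type*} [MeasurableSpace Z] (P : Measure Z) {k : ℕ}
    (h : (Fin k → Z) → ℝ) (J : Finset (Fin k)) (z : Fin k → Z) : ℝ :=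
  ∫ w : Fin k → Z, h (fun i => if i ∈ J then z i else w i) ∂(Measure.pi fun _ : Fin k => P)

/-- Canonical Hoeffding projection indexed by a subset `C`:
`h_{|C|}(z_C) = Σ_{J ⊆ C} (−1)^{|C|−|J|} E_J(z_J)`. -/
noncomputable def hoeffProj {Z : Type*} [MeasurableSpace Z] (P : Measure Z) {k : ℕ}
    (h : (Fin k → Z) → ℝ) (C : Finset (Fin k)) (z : Fin k → Z) : ℝ :=
  ∑ J ∈ C.powerset, (-1 : ℝ) ^ (C.card - J.card) * margE P h J z

section Aux

variable {Z : Type*} [MeasurableSpace Z] {k : ℕ}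

/-- Mixing map: take coordinates in `J` from the first argument, the rest from the second. -/
def mixf (J : Finset (Fin k)) (p : (Fin k → Z) × (Fin k → Z)) : Fin k → Z :=
  fun j => if j ∈ J then p.1 j else p.2 j

lemma measurable_mixf (J : Finset (Fin k)) : Measurable (mixf (Z := Z) J) := by
  apply measurable_pi_lambda
  intro j
  by_cases hj : j ∈ J
  · simp only [mixf, hj, if_true]
    exact (measurable_pi_apply j).comp measurable_fst
  · simp only [mixf, hj, if_false]
    exact (measurable_pi_apply j).comp measurable_snd

variable (P : Measure Z) [IsProbabilityMeasure P]

lemma measurePreserving_mixf (J : Finset (Fin k)) :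
    MeasurePreserving (mixf (Z := Z) J)
      ((Measure.pi fun _ : Fin k => P).prod (Measure.pi fun _ : Fin k => P))
      (Measure.pi fun _ : Fin k => P) := by
  refine ⟨measurable_mixf J, ?_⟩
  refine (Measure.pi_eq ?_).symm
  intro s hs
  have hpre : mixf (Z := Z) J ⁻¹' Set.pi Set.univ s =
      (Set.pi Set.univ fun j => if j ∈ J then s j else Set.univ) ×ˢ
      (Set.pi Set.univ fun j => if j ∈ J then Set.univ else s j) := by
    ext p
    simp only [Set.mem_preimage, Set.mem_pi, Set.mem_univ, true_implies, Set.mem_prod, mixf]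
    constructor
    · intro hp
      refine ⟨fun j => ?_, fun j => ?_⟩ <;> by_cases hj : j ∈ J <;>
        simp only [hj, if_true, if_false, Set.mem_univ] <;> simpa [hj] using hp j
    · rintro ⟨h1, h2⟩ j
      by_cases hj : j ∈ J
      · simpa [hj] using h1 j
      · simpa [hj] using h2 j
  rw [Measure.map_apply (measurable_mixf J) (MeasurableSet.univ_pi hs), hpre,
    Measure.prod_prod, Measure.pi_pi, Measure.pi_pi, ← Finset.prod_mul_distrib]
  refine Finset.prod_congr rfl fun j _ => ?_
  by_cases hj : j ∈ J <;> simp [hj]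

lemma measurable_updmap (i : Fin k) :
    Measurable (fun p : Z × (Fin k → Z) => Function.update p.2 i p.1) := by
  apply measurable_pi_lambda
  intro j
  simp only [Function.update_apply]
  split_ifs with hj
  · exact measurable_fst
  · exact (measurable_pi_apply j).comp measurable_snd

lemma measurePreserving_updmap (i : Fin k) :
    MeasurePreserving (fun p : Z × (Fin k → Z) => Function.update p.2 i p.1)
      (P.prod (Measure.pi fun _ : Fin k => P)) (Measure.pi fun _ : Fin k => P) := by
  refine ⟨measurable_updmap i, ?_⟩
  refine (Measure.pi_eq ?_).symm
  intro s hs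
  have hpre : (fun p : Z × (Fin k → Z) => Function.update p.2 i p.1) ⁻¹' Set.pi Set.univ s =
      s i ×ˢ Set.pi Set.univ (Function.update s i Set.univ) := by
    ext p
    simp only [Set.mem_preimage, Set.mem_pi, Set.mem_univ, true_implies, Set.mem_prod,
      Function.update_apply]
    constructor
    · intro hp
      refine ⟨by simpa using hp i, fun j => ?_⟩
      by_cases hj : j = i
      · simp [hj]
      · simpa [hj] using hp j
    · rintro ⟨h1, h2⟩ j
      by_cases hj : j = i
      · subst hj; simpa using h1
      · have := h2 j; simp [hj] at this ⊢; exact this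
  rw [Measure.map_apply (measurable_updmap i) (MeasurableSet.univ_pi hs), hpre,
    Measure.prod_prod, Measure.pi_pi]
  have : (fun j => P (Function.update s i Set.univ j)) = Function.update (fun j => P (s j)) i 1 := by
    funext j
    by_cases hj : j = i
    · subst hj; simp
    · simp [Function.update_apply, hj]
  rw [this, Finset.prod_update_of_mem (Finset.mem_univ i), one_mul,
    ← Finset.mul_prod_erase Finset.univ _ (Finset.mem_univ i), Finset.sdiff_singleton_eq_erase]

end Aux
section Aux2

variable {Z : Type*} [MeasurableSpace Z] {k : ℕ}
variable (P : Measure Z) [IsProbabilityMeasure P] (h : (Fin k → Z) → ℝ)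

/-- The integrand on the triple product space representing
`margE J₁ z * margE J₂ z` after integrating out the last two blocks. -/
def Ffun (J₁ J₂ : Finset (Fin k)) :
    (Fin k → Z) × ((Fin k → Z) × (Fin k → Z)) → ℝ :=
  fun q => h (mixf J₁ (q.1, q.2.1)) * h (mixf J₂ (q.1, q.2.2))

variable {h} (hmeas : Measurable h)

include hmeas in
lemma measurable_Ffun (J₁ J₂ : Finset (Fin k)) : Measurable (Ffun h J₁ J₂) := by
  refine Measurable.mul ?_ ?_
  · exact hmeas.comp ((measurable_mixf J₁).comp
      (measurable_fst.prodMk (measurable_fst.comp measurable_snd)))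
  · exact hmeas.comp ((measurable_mixf J₂).comp
      (measurable_fst.prodMk (measurable_snd.comp measurable_snd)))

lemma mp_proj1 (J : Finset (Fin k)) :
    MeasurePreserving (fun q : (Fin k → Z) × ((Fin k → Z) × (Fin k → Z)) => mixf J (q.1, q.2.1))
      ((Measure.pi fun _ : Fin k => P).prod
        ((Measure.pi fun _ : Fin k => P).prod (Measure.pi fun _ : Fin k => P)))
      (Measure.pi fun _ : Fin k => P) := by
  have hfst : MeasurePreserving (Prod.fst : (Fin k → Z) × (Fin k → Z) → (Fin k → Z))
      ((Measure.pi fun _ : Fin k => P).prod (Measure.pi fun _ : Fin k => P))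
      (Measure.pi fun _ : Fin k => P) :=
    ⟨measurable_fst, by simp⟩
  exact (measurePreserving_mixf P J).comp
    ((MeasurePreserving.id _).prod hfst)

lemma mp_proj2 (J : Finset (Fin k)) :
    MeasurePreserving (fun q : (Fin k → Z) × ((Fin k → Z) × (Fin k → Z)) => mixf J (q.1, q.2.2))
      ((Measure.pi fun _ : Fin k => P).prod
        ((Measure.pi fun _ : Fin k => P).prod (Measure.pi fun _ : Fin k => P)))
      (Measure.pi fun _ : Fin k => P) := by
  have hsnd : MeasurePreserving (Prod.snd : (Fin k → Z) × (Fin k → Z) → (Fin k → Z))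
      ((Measure.pi fun _ : Fin k => P).prod (Measure.pi fun _ : Fin k => P))
      (Measure.pi fun _ : Fin k => P) :=
    ⟨measurable_snd, by simp⟩
  exact (measurePreserving_mixf P J).comp
    ((MeasurePreserving.id _).prod hsnd)

variable (hL2 : MemLp h 2 (Measure.pi fun _ : Fin k => P))

include hmeas hL2 in
lemma integrable_Ffun (J₁ J₂ : Finset (Fin k)) :
    Integrable (Ffun h J₁ J₂)
      ((Measure.pi fun _ : Fin k => P).prod
        ((Measure.pi fun _ : Fin k => P).prod (Measure.pi fun _ : Fin k => P))) := by
  have m1 : MemLp (fun q : (Fin k → Z) × ((Fin k → Z) × (Fin k → Z)) =>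
      h (mixf J₁ (q.1, q.2.1))) 2
      ((Measure.pi fun _ : Fin k => P).prod
        ((Measure.pi fun _ : Fin k => P).prod (Measure.pi fun _ : Fin k => P))) := by
    have hT := mp_proj1 P J₁
    refine (memLp_map_measure_iff hmeas.aestronglyMeasurable
      hT.measurable.aemeasurable).mp ?_
    rw [hT.map_eq]; exact hL2
  have m2 : MemLp (fun q : (Fin k → Z) × ((Fin k → Z) × (Fin k → Z)) =>
      h (mixf J₂ (q.1, q.2.2))) 2
      ((Measure.pi fun _ : Fin k => P).prod
        ((Measure.pi fun _ : Fin k => P).prod (Measure.pi fun _ : Fin k => P))) := by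
    have hT := mp_proj2 P J₂
    refine (memLp_map_measure_iff hmeas.aestronglyMeasurable
      hT.measurable.aemeasurable).mp ?_
    rw [hT.map_eq]; exact hL2
  have hmul := m2.smul (𝕜 := ℝ) m1 (r := 1)
    (hpqr := ⟨by rw [inv_one, ENNReal.inv_two_add_inv_two]⟩)
  rw [memLp_one_iff_integrable] at hmul
  exact hmul.congr (Filter.Eventually.of_forall fun q => by
    simp [Ffun, smul_eq_mul])

end Aux2
section Aux3

variable {Z : Type*} [MeasurableSpace Z] {k : ℕ}
variable (P : Measure Z) [IsProbabilityMeasure P] {h : (Fin k → Z) → ℝ}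
variable (hmeas : Measurable h) (hL2 : MemLp h 2 (Measure.pi fun _ : Fin k => P))

include hmeas hL2 in
lemma integral_margE_mul (J₁ J₂ : Finset (Fin k)) :
    ∫ z, margE P h J₁ z * margE P h J₂ z ∂(Measure.pi fun _ : Fin k => P) =
      ∫ q, Ffun h J₁ J₂ q ∂((Measure.pi fun _ : Fin k => P).prod
        ((Measure.pi fun _ : Fin k => P).prod (Measure.pi fun _ : Fin k => P))) := by
  rw [MeasureTheory.integral_prod _ (integrable_Ffun P hmeas hL2 J₁ J₂)]
  refine integral_congr_ae (Filter.Eventually.of_forall fun z => ?_)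
  have := (integral_prod_mul (μ := (Measure.pi fun _ : Fin k => P))
    (ν := (Measure.pi fun _ : Fin k => P))
    (fun w => h (mixf J₁ (z, w))) (fun w => h (mixf J₂ (z, w)))).symm
  simpa [margE, show ∀ (J : Finset (Fin k)) (p : (Fin k → Z) × (Fin k → Z)),
    mixf J p = fun j => if j ∈ J then p.1 j else p.2 j from fun _ _ => rfl, Ffun] using this

include hmeas hL2 in
lemma integrable_margE_mul (J₁ J₂ : Finset (Fin k)) :
    Integrable (fun z => margE P h J₁ z * margE P h J₂ z)
      (Measure.pi fun _ : Fin k => P) := by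
  have h1 := (integrable_Ffun P hmeas hL2 J₁ J₂).integral_prod_left
  refine h1.congr (Filter.Eventually.of_forall fun z => ?_)
  have := integral_prod_mul (μ := (Measure.pi fun _ : Fin k => P))
    (ν := (Measure.pi fun _ : Fin k => P))
    (fun w => h (mixf J₁ (z, w))) (fun w => h (mixf J₂ (z, w)))
  simpa [margE, show ∀ (J : Finset (Fin k)) (p : (Fin k → Z) × (Fin k → Z)),
    mixf J p = fun j => if j ∈ J then p.1 j else p.2 j from fun _ _ => rfl, Ffun] using this

end Aux3
section Aux4

variable {Z : Type*} [MeasurableSpace Z] {k : ℕ}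
variable (P : Measure Z) [IsProbabilityMeasure P] {h : (Fin k → Z) → ℝ}

include P in

lemma integral_Ffun_erase (hmeas : Measurable h) {i : Fin k} {J₁ J₂ : Finset (Fin k)}
    (hi₁ : i ∈ J₁) (hi₂ : i ∉ J₂) :
    ∫ q, Ffun h J₁ J₂ q ∂((Measure.pi fun _ : Fin k => P).prod
        ((Measure.pi fun _ : Fin k => P).prod (Measure.pi fun _ : Fin k => P))) =
    ∫ q, Ffun h (J₁.erase i) J₂ q ∂((Measure.pi fun _ : Fin k => P).prod
        ((Measure.pi fun _ : Fin k => P).prod (Measure.pi fun _ : Fin k => P))) := by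
  set π : Measure (Fin k → Z) := Measure.pi fun _ : Fin k => P with hπ
  set ν : Measure ((Fin k → Z) × (Fin k → Z)) := π.prod π with hν
  have mpu := measurePreserving_updmap P i
  set u : Z × (Fin k → Z) → (Fin k → Z) := fun p => Function.update p.2 i p.1 with hu
  -- the common base space: `P ⊗ π ⊗ π ⊗ π` with coordinates `(x, (z, (w₁, w₂)))`
  -- Left-hand side
  have e1 : MeasurePreserving (Prod.map u (id : (Fin k → Z) × (Fin k → Z) → _))
      ((P.prod π).prod ν) (π.prod ν) := mpu.prod (MeasurePreserving.id ν)
  have ea : MeasurePreserving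
      (MeasurableEquiv.prodAssoc : (Z × (Fin k → Z)) × ((Fin k → Z) × (Fin k → Z)) ≃ᵐ _)
      ((P.prod π).prod ν) (P.prod (π.prod ν)) := measurePreserving_prodAssoc _ _ _
  have mpL := e1.comp (MeasurePreserving.symm _ ea)
  have hL : ∫ q, Ffun h J₁ J₂ q ∂(π.prod ν) =
      ∫ r : Z × ((Fin k → Z) × ((Fin k → Z) × (Fin k → Z))),
        Ffun h J₁ J₂ (Function.update r.2.1 i r.1, r.2.2) ∂(P.prod (π.prod ν)) := by
    conv_lhs => rw [← mpL.map_eq]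
    exact integral_map mpL.measurable.aemeasurable
      (measurable_Ffun hmeas J₁ J₂).aestronglyMeasurable
  -- Right-hand side
  have e2 : MeasurePreserving
      (Prod.map (id : (Fin k → Z) → _) (Prod.map u (id : (Fin k → Z) → _)))
      (π.prod ((P.prod π).prod π)) (π.prod ν) :=
    (MeasurePreserving.id π).prod (mpu.prod (MeasurePreserving.id π))
  have sa : MeasurePreserving
      (MeasurableEquiv.prodAssoc.symm :
        Z × ((Fin k → Z) × ((Fin k → Z) × (Fin k → Z))) ≃ᵐ _)
      (P.prod (π.prod ν)) ((P.prod π).prod ν) :=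
    MeasurePreserving.symm _ (measurePreserving_prodAssoc _ _ _)
  have sb : MeasurePreserving
      (Prod.map (Prod.swap : Z × (Fin k → Z) → _) (id : (Fin k → Z) × (Fin k → Z) → _))
      ((P.prod π).prod ν) ((π.prod P).prod ν) :=
    MeasurePreserving.prod Measure.measurePreserving_swap (MeasurePreserving.id ν)
  have sc : MeasurePreserving
      (MeasurableEquiv.prodAssoc : ((Fin k → Z) × Z) × ((Fin k → Z) × (Fin k → Z)) ≃ᵐ _)
      ((π.prod P).prod ν) (π.prod (P.prod ν)) := measurePreserving_prodAssoc _ _ _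
  have sd : MeasurePreserving
      (Prod.map (id : (Fin k → Z) → _)
        (MeasurableEquiv.prodAssoc.symm : Z × ((Fin k → Z) × (Fin k → Z)) ≃ᵐ _))
      (π.prod (P.prod ν)) (π.prod ((P.prod π).prod π)) :=
    (MeasurePreserving.id π).prod (MeasurePreserving.symm _ (measurePreserving_prodAssoc _ _ _))
  have mpR := (e2.comp (sd.comp (sc.comp (sb.comp sa))))
  have hR : ∫ q, Ffun h (J₁.erase i) J₂ q ∂(π.prod ν) =
      ∫ r : Z × ((Fin k → Z) × ((Fin k → Z) × (Fin k → Z))),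
        Ffun h (J₁.erase i) J₂ (r.2.1, (Function.update r.2.2.1 i r.1, r.2.2.2))
          ∂(P.prod (π.prod ν)) := by
    conv_lhs => rw [← mpR.map_eq]
    exact integral_map mpR.measurable.aemeasurable
      (measurable_Ffun hmeas (J₁.erase i) J₂).aestronglyMeasurable
  rw [hL, hR]
  refine integral_congr_ae (Filter.Eventually.of_forall ?_)
  rintro ⟨x, z, w₁, w₂⟩
  show h (mixf J₁ (Function.update z i x, w₁)) * h (mixf J₂ (Function.update z i x, w₂)) =
    h (mixf (J₁.erase i) (z, Function.update w₁ i x)) * h (mixf J₂ (z, w₂))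
  congr 1
  · congr 1
    funext j
    by_cases hj : j = i
    · subst hj
      simp [mixf, hi₁]
    · simp [mixf, Function.update_of_ne hj, Finset.mem_erase, hj]
  · congr 1
    funext j
    by_cases hj : j = i
    · subst hj
      simp [mixf, hi₂]
    · simp [mixf, Function.update_of_ne hj]

end Aux4
section Aux5

variable {Z : Type*} [MeasurableSpace Z] {k : ℕ}
variable (P : Measure Z) [IsProbabilityMeasure P] {h : (Fin k → Z) → ℝ}
variable (hmeas : Measurable h) (hL2 : MemLp h 2 (Measure.pi fun _ : Fin k => P))

include hmeas hL2 in
lemma iota_erase {i : Fin k} {J₁ J₂ : Finset (Fin k)} (hi₁ : i ∈ J₁) (hi₂ : i ∉ J₂) :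
    ∫ z, margE P h J₁ z * margE P h J₂ z ∂(Measure.pi fun _ : Fin k => P) =
    ∫ z, margE P h (J₁.erase i) z * margE P h J₂ z ∂(Measure.pi fun _ : Fin k => P) := by
  rw [integral_margE_mul P hmeas hL2, integral_margE_mul P hmeas hL2,
    integral_Ffun_erase P hmeas hi₁ hi₂]

include hmeas hL2 in
lemma orth_aux {C₁ C₂ : Finset (Fin k)} {i : Fin k} (hi : i ∈ C₁) (hni : i ∉ C₂) :
    ∫ z : Fin k → Z, hoeffProj P h C₁ z * hoeffProj P h C₂ z
      ∂(Measure.pi fun _ : Fin k => P) = 0 := by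
  have hIntTerm : ∀ J₁ ∈ C₁.powerset, ∀ J₂ ∈ C₂.powerset,
      Integrable (fun z => ((-1 : ℝ) ^ (C₁.card - J₁.card) * margE P h J₁ z) *
        ((-1 : ℝ) ^ (C₂.card - J₂.card) * margE P h J₂ z))
        (Measure.pi fun _ : Fin k => P) := by
    intro J₁ _ J₂ _
    have := (integrable_margE_mul P hmeas hL2 J₁ J₂).const_mul
      ((-1 : ℝ) ^ (C₁.card - J₁.card) * (-1 : ℝ) ^ (C₂.card - J₂.card))
    exact this.congr (Filter.Eventually.of_forall fun z => by ring)
  simp_rw [hoeffProj, Finset.sum_mul_sum]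
  rw [integral_finset_sum _ (fun J₁ hJ₁ =>
    integrable_finset_sum _ (fun J₂ hJ₂ => hIntTerm J₁ hJ₁ J₂ hJ₂))]
  rw [Finset.sum_congr rfl (fun J₁ hJ₁ =>
    integral_finset_sum _ (fun J₂ hJ₂ => hIntTerm J₁ hJ₁ J₂ hJ₂))]
  rw [Finset.sum_comm]
  refine Finset.sum_eq_zero fun J₂ hJ₂ => ?_
  have hiJ₂ : i ∉ J₂ := fun hmem => hni (Finset.mem_powerset.mp hJ₂ hmem)
  -- rewrite each integral as a constant multiple of `ι J₁ J₂`
  have hterm : ∀ J₁ : Finset (Fin k),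
      ∫ z, ((-1 : ℝ) ^ (C₁.card - J₁.card) * margE P h J₁ z) *
        ((-1 : ℝ) ^ (C₂.card - J₂.card) * margE P h J₂ z)
        ∂(Measure.pi fun _ : Fin k => P) =
      ((-1 : ℝ) ^ (C₁.card - J₁.card) * (-1 : ℝ) ^ (C₂.card - J₂.card)) *
        ∫ z, margE P h J₁ z * margE P h J₂ z ∂(Measure.pi fun _ : Fin k => P) := by
    intro J₁
    rw [← integral_const_mul]
    exact integral_congr_ae (Filter.Eventually.of_forall fun z => by ring)
  rw [Finset.sum_congr rfl fun J₁ _ => hterm J₁]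
  -- now the cancellation
  have hC : C₁ = insert i (C₁.erase i) := (Finset.insert_erase hi).symm
  rw [hC, Finset.sum_powerset_insert (Finset.notMem_erase i C₁), ← Finset.sum_add_distrib]
  refine Finset.sum_eq_zero fun J hJ => ?_
  have hJsub : J ⊆ C₁.erase i := Finset.mem_powerset.mp hJ
  have hiJ : i ∉ J := fun hmem => Finset.notMem_erase i C₁ (hJsub hmem)
  have hι : ∫ z, margE P h (insert i J) z * margE P h J₂ z ∂(Measure.pi fun _ : Fin k => P)
      = ∫ z, margE P h J z * margE P h J₂ z ∂(Measure.pi fun _ : Fin k => P) := by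
    have := iota_erase P hmeas hL2 (Finset.mem_insert_self i J) hiJ₂
    rwa [Finset.erase_insert hiJ] at this
  have hcard : (insert i J).card = J.card + 1 := Finset.card_insert_of_notMem hiJ
  have h1 : J.card ≤ (C₁.erase i).card := Finset.card_le_card hJsub
  have h2 : (C₁.erase i).card = C₁.card - 1 := Finset.card_erase_of_mem hi
  have h3 : 1 ≤ C₁.card := Finset.card_pos.mpr ⟨i, hi⟩
  rw [Finset.insert_erase hi, hι, hcard]
  have he : C₁.card - J.card = (C₁.card - (J.card + 1)) + 1 := by omega
  rw [he, pow_succ]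
  ring

end Aux5
/-- **Mutual orthogonality of the canonical Hoeffding projections.**
For any two distinct subsets `C₁ ≠ C₂` of `{1,…,k}`, the projections indexed by `C₁`
and `C₂` are orthogonal in `L²(P^{⊗k})`. -/
theorem hoeffProj_orthogonal {Z : Type*} [MeasurableSpace Z]
    (P : Measure Z) [IsProbabilityMeasure P]
    (k : ℕ) (h : (Fin k → Z) → ℝ) (hmeas : Measurable h)
    (hsymm : ∀ (σ : Equiv.Perm (Fin k)) (z : Fin k → Z), h (z ∘ σ) = h z)
    (hL2 : MemLp h 2 (Measure.pi fun _ : Fin k => P))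
    (C₁ C₂ : Finset (Fin k)) (hne : C₁ ≠ C₂) :
    ∫ z : Fin k → Z, hoeffProj P h C₁ z * hoeffProj P h C₂ z
      ∂(Measure.pi fun _ : Fin k => P) = 0 := by
  by_cases hsub : C₁ ⊆ C₂
  · have hsub2 : ¬C₂ ⊆ C₁ := fun hc => hne (Finset.Subset.antisymm hsub hc)
    obtain ⟨i, hi, hni⟩ := Finset.not_subset.mp hsub2
    rw [integral_congr_ae (Filter.Eventually.of_forall fun z =>
      mul_comm (hoeffProj P h C₁ z) (hoeffProj P h C₂ z))]
    exact orth_aux P hmeas hL2 hi hni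
  · obtain ⟨i, hi, hni⟩ := Finset.not_subset.mp hsub
    exact orth_aux P hmeas hL2 hi hni
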